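/- Let R be a finite (not necessarily unital, not necessarily commutative) ring and S a subring of R. Then Pr(S, R) = Pr(R) if and only if S + C_R(r) = R for all r ∈ R. -/

import Mathlib

open scoped Pointwise

/-- The probability that a randomly chosen pair, one element from `S` and one from `T`,
commutes (multiplicatively). For a subring `S` of a finite ring `R` this gives
`Pr(S, R) = relCommProb R S Set.univ`, `Pr(R) = relCommProb R Set.univ Set.univ`, etc. -/
noncomputable def relCommProb (R : Type*) [NonUnitalRing R] (S T : Set R) : ℚ :=
  (Nat.card {p : S × T // (p.1 : R) * (p.2 : R) = (p.2 : R) * (p.1 : R)} : ℚ) /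
    ((Nat.card S : ℚ) * (Nat.card T : ℚ))

/-- `C_S(r)`: the centralizer of `r` in the subring `S`, as an additive subgroup of `R`.
Taking `S = ⊤` gives `C_R(r)`. -/
def centIn {R : Type*} [NonUnitalRing R] (S : NonUnitalSubring R) (r : R) : AddSubgroup R where
  carrier := {x | x ∈ S ∧ x * r = r * x}
  zero_mem' := ⟨S.zero_mem, by rw [zero_mul, mul_zero]⟩
  add_mem' := by
    rintro a b ⟨ha, ha'⟩ ⟨hb, hb'⟩
    exact ⟨S.add_mem ha hb, by rw [add_mul, mul_add, ha', hb']⟩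
  neg_mem' := by
    rintro a ⟨ha, ha'⟩
    exact ⟨S.neg_mem ha, by rw [neg_mul, mul_neg, ha']⟩

/-- `Z(S, R)`: the elements of the subring `S` commuting with every element of `R`,
as an additive subgroup of `R`.  Taking `S = ⊤` gives the center `Z(R)`. -/
def zCenter {R : Type*} [NonUnitalRing R] (S : NonUnitalSubring R) : AddSubgroup R where
  carrier := {x | x ∈ S ∧ ∀ r : R, x * r = r * x}
  zero_mem' := ⟨S.zero_mem, fun r => by rw [zero_mul, mul_zero]⟩
  add_mem' := by
    rintro a b ⟨ha, ha'⟩ ⟨hb, hb'⟩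
    exact ⟨S.add_mem ha hb, fun r => by rw [add_mul, mul_add, ha' r, hb' r]⟩
  neg_mem' := by
    rintro a ⟨ha, ha'⟩
    exact ⟨S.neg_mem ha, fun r => by rw [neg_mul, mul_neg, ha' r]⟩

/-- `K(S, R)`: the set of additive commutators `s*r - r*s` with `s ∈ S`, `r ∈ R`. -/
def kSet {R : Type*} [NonUnitalRing R] (S : NonUnitalSubring R) : Set R :=
  {x | ∃ s ∈ S, ∃ r : R, x = s * r - r * s}

/-- `[S, R]`: the additive subgroup of `(R, +)` generated by `K(S, R)`. -/
def commSub {R : Type*} [NonUnitalRing R] (S : NonUnitalSubring R) : AddSubgroup R :=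
  AddSubgroup.closure (kSet S)

/-- `[x, R]`: the additive subgroup of all commutators `x*y - y*x`, `y ∈ R`. -/
def elemComm {R : Type*} [NonUnitalRing R] (x : R) : AddSubgroup R where
  carrier := {z | ∃ y : R, z = x * y - y * x}
  zero_mem' := ⟨0, by simp⟩
  add_mem' := by
    rintro a b ⟨y, rfl⟩ ⟨z, rfl⟩
    exact ⟨y + z, by rw [mul_add, add_mul]; abel⟩
  neg_mem' := by
    rintro a ⟨y, rfl⟩
    exact ⟨-y, by rw [mul_neg, neg_mul]; abel⟩

section AuxGroup
variable {G : Type*} [AddCommGroup G]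

lemma card_addSubgroupOf' (A C : AddSubgroup G) :
    Nat.card (A.addSubgroupOf C) = Nat.card (A ⊓ C : AddSubgroup G) := by
  refine Nat.card_congr ⟨fun x => ⟨x.1.1, ?_⟩, fun y => ⟨⟨y.1, ?_⟩, ?_⟩, fun x => rfl, fun y => rfl⟩
  · exact AddSubgroup.mem_inf.mpr ⟨AddSubgroup.mem_addSubgroupOf.mp x.2, x.1.2⟩
  · exact (AddSubgroup.mem_inf.mp y.2).2
  · exact AddSubgroup.mem_addSubgroupOf.mpr (AddSubgroup.mem_inf.mp y.2).1

lemma card_inf_mul_card_sup' [Finite G] (A C : AddSubgroup G) :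
    Nat.card (A ⊓ C : AddSubgroup G) * Nat.card (A ⊔ C : AddSubgroup G)
      = Nat.card A * Nat.card C := by
  have h1 : Nat.card (A ⊓ C : AddSubgroup G) * A.relIndex C = Nat.card C := by
    rw [← card_addSubgroupOf']
    exact AddSubgroup.card_mul_index (A.addSubgroupOf C)
  have h2 : Nat.card A * A.relIndex (A ⊔ C) = Nat.card (A ⊔ C : AddSubgroup G) := by
    have := AddSubgroup.card_mul_index (A.addSubgroupOf (A ⊔ C))
    rwa [card_addSubgroupOf', inf_of_le_left (le_sup_left : A ≤ A ⊔ C)] at this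
  have h3 : A.relIndex (A ⊔ C) = A.relIndex C := by
    rw [sup_comm]; exact AddSubgroup.relIndex_sup_right C A
  calc Nat.card (A ⊓ C : AddSubgroup G) * Nat.card (A ⊔ C : AddSubgroup G)
      = Nat.card A * (Nat.card (A ⊓ C : AddSubgroup G) * A.relIndex C) := by
        rw [← h2, h3]; ring
    _ = Nat.card A * Nat.card C := by rw [h1]

end AuxGroup

section Count
variable {R : Type*} [NonUnitalRing R] [Fintype R]

lemma count_pairs' (S : Set R) :
    Nat.card {p : S × (Set.univ : Set R) // (p.1 : R) * (p.2 : R) = (p.2 : R) * (p.1 : R)}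
      = ∑ r : R, Nat.card {s : S // (s : R) * r = r * (s : R)} := by
  classical
  have e : {p : S × (Set.univ : Set R) // (p.1 : R) * (p.2 : R) = (p.2 : R) * (p.1 : R)}
      ≃ (r : R) × {s : S // (s : R) * r = r * (s : R)} :=
    { toFun := fun p => ⟨p.1.2.1, ⟨p.1.1, p.2⟩⟩
      invFun := fun x => ⟨(x.2.1, ⟨x.1, trivial⟩), x.2.2⟩
      left_inv := fun p => rfl
      right_inv := fun x => rfl }
  rw [Nat.card_congr e]
  simp [Nat.card_eq_fintype_card, Fintype.card_sigma]

end Count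

/-- `Pr(S, R) = Pr(R)` iff `S + C_R(r) = R` for all `r ∈ R`. -/
theorem relCommProb_eq_commProb_iff {R : Type*} [NonUnitalRing R] [Fintype R]
    (S : NonUnitalSubring R) :
    relCommProb R (S : Set R) Set.univ = relCommProb R Set.univ Set.univ ↔
      ∀ r : R, (S : Set R) + ((centIn ⊤ r : AddSubgroup R) : Set R) = Set.univ := by
  classical
  set A : AddSubgroup R := S.toAddSubgroup with hA
  have hAS : (A : Set R) = (S : Set R) := rfl
  set C : R → AddSubgroup R := fun r => centIn ⊤ r with hC
  set n : ℕ := Nat.card R with hn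
  set s : ℕ := Nat.card ↥(S : Set R) with hs
  have hsA : s = Nat.card A := rfl
  have hns : Nat.card ↥(Set.univ : Set R) = n := by
    rw [Nat.card_coe_set_eq, Set.ncard_univ]
  have hcard1 : ∀ r : R, Nat.card {x : (S : Set R) // (x : R) * r = r * (x : R)}
      = Nat.card (A ⊓ C r : AddSubgroup R) := by
    intro r
    refine Nat.card_congr ⟨fun x => ⟨x.1.1, ?_⟩, fun y => ⟨⟨y.1, ?_⟩, ?_⟩,
      fun _ => rfl, fun _ => rfl⟩
    · exact AddSubgroup.mem_inf.mpr ⟨x.1.2, ⟨trivial, x.2⟩⟩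
    · exact (AddSubgroup.mem_inf.mp y.2).1
    · exact (AddSubgroup.mem_inf.mp y.2).2.2
  have hcard2 : ∀ r : R, Nat.card {x : (Set.univ : Set R) // (x : R) * r = r * (x : R)}
      = Nat.card (C r : AddSubgroup R) := by
    intro r
    refine Nat.card_congr ⟨fun x => ⟨x.1.1, ?_⟩, fun y => ⟨⟨y.1, trivial⟩, ?_⟩,
      fun _ => rfl, fun _ => rfl⟩
    · exact ⟨trivial, x.2⟩
    · exact y.2.2
  set X : ℕ := ∑ r : R, Nat.card (A ⊓ C r : AddSubgroup R) with hX
  set Y : ℕ := ∑ r : R, Nat.card (C r : AddSubgroup R) with hY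
  have hnpos : 0 < n := Nat.card_pos
  have hspos : 0 < s := by
    haveI : Nonempty ↥(S : Set R) := ⟨⟨0, S.zero_mem⟩⟩
    exact Nat.card_pos
  have hL : relCommProb R (S : Set R) Set.univ = (X : ℚ) / ((s : ℚ) * (n : ℚ)) := by
    rw [relCommProb, count_pairs', hns, ← hs]
    congr 2
    exact Finset.sum_congr rfl fun r _ => hcard1 r
  have hR : relCommProb R (Set.univ : Set R) Set.univ = (Y : ℚ) / ((n : ℚ) * (n : ℚ)) := by
    rw [relCommProb, count_pairs', hns]
    congr 2
    exact Finset.sum_congr rfl fun r _ => hcard2 r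
  rw [hL, hR]
  have key : ((X : ℚ) / ((s : ℚ) * n) = (Y : ℚ) / ((n : ℚ) * n)) ↔ Y * s = X * n := by
    rw [div_eq_div_iff (by positivity) (by positivity),
      show (X : ℚ) * ((n : ℚ) * n) = (X * n : ℕ) * (n : ℚ) by push_cast; ring,
      show (Y : ℚ) * ((s : ℚ) * n) = (Y * s : ℕ) * (n : ℚ) by push_cast; ring,
      mul_left_inj' (show (n : ℚ) ≠ 0 by positivity), Nat.cast_inj, eq_comm]
  rw [key]
  have per : ∀ r : R, Nat.card (C r : AddSubgroup R) * s
      ≤ Nat.card (A ⊓ C r : AddSubgroup R) * n := by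
    intro r
    have h := card_inf_mul_card_sup' A (C r)
    have hle : Nat.card (A ⊔ C r : AddSubgroup R) ≤ n :=
      Nat.card_le_card_of_injective _ (A ⊔ C r).subtype_injective
    calc Nat.card (C r : AddSubgroup R) * s
        = Nat.card (A ⊓ C r : AddSubgroup R) * Nat.card (A ⊔ C r : AddSubgroup R) := by
          rw [hsA, mul_comm, ← h]
      _ ≤ Nat.card (A ⊓ C r : AddSubgroup R) * n := Nat.mul_le_mul_left _ hle
  have pereq : ∀ r : R, (Nat.card (C r : AddSubgroup R) * s
      = Nat.card (A ⊓ C r : AddSubgroup R) * n ↔ A ⊔ C r = ⊤) := by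
    intro r
    have h := card_inf_mul_card_sup' A (C r)
    have hpos : 0 < Nat.card (A ⊓ C r : AddSubgroup R) := Nat.card_pos
    constructor
    · intro he
      apply AddSubgroup.eq_top_of_card_eq
      apply Nat.eq_of_mul_eq_mul_left hpos
      rw [h, ← hsA, mul_comm s]
      exact he
    · intro he
      have hct : Nat.card (A ⊔ C r : AddSubgroup R) = n := by
        rw [he, hn]
        exact Nat.card_congr AddSubgroup.topEquiv.toEquiv
      rw [hsA, mul_comm, ← h, hct]
  have hsum : Y * s = X * n ↔ ∀ r : R,
      Nat.card (C r : AddSubgroup R) * s = Nat.card (A ⊓ C r : AddSubgroup R) * n := by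
    rw [hX, hY, Finset.sum_mul, Finset.sum_mul,
      Finset.sum_eq_sum_iff_of_le fun r _ => per r]
    exact ⟨fun h r => h r (Finset.mem_univ r), fun h r _ => h r⟩
  rw [hsum]
  refine forall_congr' fun r => ?_
  rw [pereq r, ← AddSubgroup.coe_eq_univ, AddSubgroup.add_normal A (C r), hAS]
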